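/- Let G and H be graphs and v a vertex of G that is dismantlable, i.e., there exists another vertex w with N(v) ⊆ N(w), where N(x) is the set of vertices adjacent to x. Then the inclusion of the induced subgraph G ∖ v into G is a ×-homotopy equivalence: there is a graph homomorphism g : G → G ∖ v such that the composites lie in the same connected component of the corresponding Hom posets as the identities. -/

import Mathlib

/-- A graph: a symmetric relation on a vertex type (loops allowed). -/
structure LGraph (V : Type*) where
  adj : V → V → Prop
  symm : ∀ {x y : V}, adj x y → adj y x

variable {V W U : Type*}

/-- `f` is a graph homomorphism from `G` to `H`. -/
def IsGraphHom (G : LGraph V) (H : LGraph W) (f : V → W) : Prop :=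
  ∀ {x y : V}, G.adj x y → H.adj (f x) (f y)

/-- The type of graph homomorphisms. -/
def GHom (G : LGraph V) (H : LGraph W) := {f : V → W // IsGraphHom G H f}

def GHom.id (G : LGraph V) : GHom G G := ⟨fun x => x, fun h => h⟩

def GHom.comp {G : LGraph V} {H : LGraph W} {K : LGraph U}
    (g : GHom H K) (f : GHom G H) : GHom G K :=
  ⟨fun x => g.1 (f.1 x), fun h => g.2 (f.2 h)⟩

/-- `η` is a multi-homomorphism from `G` to `H`. -/
def IsMultiHom (G : LGraph V) (H : LGraph W) (η : V → Set W) : Prop :=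
  (∀ x, (η x).Nonempty) ∧
    ∀ {x y}, G.adj x y → ∀ a ∈ η x, ∀ b ∈ η y, H.adj a b

/-- The Hom complex `Hom(G,H)`: the poset of multi-homomorphisms. -/
def MultiHom (G : LGraph V) (H : LGraph W) := {η : V → Set W // IsMultiHom G H η}

instance (G : LGraph V) (H : LGraph W) : PartialOrder (MultiHom G H) :=
  Subtype.partialOrder _

/-- A graph homomorphism regarded as a multi-homomorphism (pointwise singletons). -/
def GHom.toMulti {G : LGraph V} {H : LGraph W} (f : GHom G H) : MultiHom G H :=
  ⟨fun x => {f.1 x}, fun x => ⟨f.1 x, rfl⟩, by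
    intro x y h a ha b hb
    rw [Set.mem_singleton_iff] at ha hb
    subst ha; subst hb
    exact f.2 h⟩

/-- Two homomorphisms are ×-homotopic iff they lie in the same connected
component of the poset `Hom(G,H)`. -/
def XHomotopic {G : LGraph V} {H : LGraph W} (f g : GHom G H) : Prop :=
  Relation.ReflTransGen (fun η η' : MultiHom G H => η ≤ η' ∨ η' ≤ η)
    f.toMulti g.toMulti

/-- The induced subgraph of `G` on a set `S` of vertices. -/
def induced (G : LGraph V) (S : Set V) : LGraph S where
  adj x y := G.adj x.1 y.1
  symm h := G.symm h

/-- The inclusion of an induced subgraph. -/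
def inclHom (G : LGraph V) (S : Set V) : GHom (induced G S) G :=
  ⟨fun x => x.1, fun h => h⟩

/-- If `v` is a dismantlable vertex of `G` (there is another vertex `w` with
`N(v) ⊆ N(w)`), then the inclusion `G ∖ v ↪ G` of the induced subgraph on the
remaining vertices is a ×-homotopy equivalence. -/
theorem stmt_7 (G : LGraph V) (v w : V) (hwv : w ≠ v)
    (hN : ∀ x, G.adj v x → G.adj w x) :
    ∃ g : GHom G (induced G {x | x ≠ v}),
      XHomotopic ((inclHom G {x | x ≠ v}).comp g) (GHom.id G) ∧
      XHomotopic (g.comp (inclHom G {x | x ≠ v})) (GHom.id (induced G {x | x ≠ v})) := by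
    classical
  -- adjacency facts needed when loops at v occur
  have key : ∀ {x y}, G.adj x y → G.adj (if x = v then w else x) (if y = v then w else y) := by
    intro x y h
    by_cases hx : x = v <;> by_cases hy : y = v <;> simp [hx, hy] at *
    · exact hN w (G.symm (hN v h))
    · exact hN y h
    · exact G.symm (hN x (G.symm h))
    · exact h
  have hg : IsGraphHom G (induced G {x | x ≠ v})
      (fun x => if h : x = v then ⟨w, hwv⟩ else ⟨x, h⟩) := by
    intro x y h
    show G.adj _ _
    have := key h
    by_cases hx : x = v <;> by_cases hy : y = v <;> simp [hx, hy] at this ⊢ <;> exact this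
  refine ⟨⟨fun x => if h : x = v then ⟨w, hwv⟩ else ⟨x, h⟩, hg⟩, ?_, ?_⟩
  · -- first homotopy, via η x = {x, (if x=v then w else x)}
    set gv : V → V := fun x => if x = v then w else x with hgv
    have hη : IsMultiHom G G (fun x => {x, gv x}) := by
      constructor
      · intro x; exact ⟨x, Or.inl rfl⟩
      · intro x y h a ha b hb
        have hxy' : G.adj x (gv y) := by
          by_cases hy : y = v
          · rw [hy] at h ⊢; simp only [hgv, if_pos rfl]
            exact G.symm (hN x (G.symm h))
          · simpa [hgv, hy] using h
        have hxy'' : G.adj (gv x) y := by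
          by_cases hx : x = v
          · rw [hx] at h ⊢; simp only [hgv, if_pos rfl]
            exact hN y h
          · simpa [hgv, hx] using h
        rcases ha with ha | ha <;> rcases hb with hb | hb <;> rw [ha, hb]
        · exact h
        · exact hxy'
        · exact hxy''
        · exact key h
    have h1 : ((inclHom G {x | x ≠ v}).comp ⟨fun x => if h : x = v then ⟨w, hwv⟩ else ⟨x, h⟩, hg⟩).toMulti ≤ (⟨fun x => {x, gv x}, hη⟩ : MultiHom G G) := by
      intro x a ha
      simp only [GHom.toMulti, GHom.comp, inclHom, Set.mem_singleton_iff] at ha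
      subst ha
      by_cases hx : x = v <;> simp [hx, hgv]
    have h2 : (GHom.id G).toMulti ≤ (⟨fun x => {x, gv x}, hη⟩ : MultiHom G G) := by
      intro x a ha
      simp only [GHom.toMulti, GHom.id, Set.mem_singleton_iff] at ha
      subst ha; exact Or.inl rfl
    exact Relation.ReflTransGen.head (Or.inl h1) (Relation.ReflTransGen.single (Or.inr h2))
  · -- second: the composite is literally the identity
    have : (GHom.comp ⟨fun x => if h : x = v then ⟨w, hwv⟩ else ⟨x, h⟩, hg⟩ (inclHom G {x | x ≠ v})) = GHom.id (induced G {x | x ≠ v}) := by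
      apply Subtype.ext
      funext x
      simp only [GHom.comp, inclHom, GHom.id]
      exact dif_neg x.2
    rw [this]
    exact Relation.ReflTransGen.refl
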